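/- The crossed H-module (Yetter–Drinfeld) compatibility between the action ▷ and the pushout coaction Δ_L = (d⊗id)Δ, namely d(h_(1)▷a_(1)) ⊗ (h_(2)▷a_(2)) = h_(1) d(a_(1)) S(h_(2)) ⊗ (h_(3)▷a_(2)) in H⊗A for all h ∈ H and a ∈ A, holds if and only if d(h▷a) = h_(1) d(a) S(h_(2)) for all h ∈ H, a ∈ A. (Proposition 2.2, part (2).) -/

import Mathlib

open TensorProduct

noncomputable section

variable (k A H : Type*) [Field k] [Ring A] [Ring H]
  [HopfAlgebra k A] [HopfAlgebra k H]

/-- `t(a⊗h) = d(a)h`. -/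
def tmap (d : A →ₗ[k] H) : A ⊗[k] H →ₗ[k] H :=
  LinearMap.mul' k H ∘ₗ map d LinearMap.id

/-- `s(a⊗h) = ε(a)h`. -/
def smap : A ⊗[k] H →ₗ[k] H :=
  (TensorProduct.lid k H).toLinearMap ∘ₗ map (Coalgebra.counit : A →ₗ[k] k) LinearMap.id

/-- `i(h) = 1⊗h`. -/
def imap : H →ₗ[k] A ⊗[k] H := TensorProduct.mk k A H 1

/-- The tensor-product coproduct `Δ(a⊗h) = (a₁⊗h₁) ⊗ (a₂⊗h₂)` on `H1 = A ⊗ H`. -/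
def comul1 : A ⊗[k] H →ₗ[k] (A ⊗[k] H) ⊗[k] (A ⊗[k] H) :=
  (tensorTensorTensorComm k A A H H).toLinearMap ∘ₗ
    map (Coalgebra.comul : A →ₗ[k] A ⊗[k] A) (Coalgebra.comul : H →ₗ[k] H ⊗[k] H)

/-- The tensor-product counit `ε(a⊗h) = ε(a)ε(h)` on `H1 = A ⊗ H`. -/
def counit1 : A ⊗[k] H →ₗ[k] k :=
  (TensorProduct.lid k k).toLinearMap ∘ₗ
    map (Coalgebra.counit : A →ₗ[k] k) (Coalgebra.counit : H →ₗ[k] k)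

/-- The left coaction `DL = (t⊗id)Δ`. -/
def DLmap (d : A →ₗ[k] H) : A ⊗[k] H →ₗ[k] H ⊗[k] (A ⊗[k] H) :=
  map (tmap k A H d) LinearMap.id ∘ₗ comul1 k A H

/-- The right coaction `DR = (id⊗s)Δ`. -/
def DRmap : A ⊗[k] H →ₗ[k] (A ⊗[k] H) ⊗[k] H :=
  map LinearMap.id (smap k A H) ∘ₗ comul1 k A H

/-- The second product `(a⊗h)∘(b⊗g) = ε(h) ab ⊗ g`. -/
def circ : (A ⊗[k] H) ⊗[k] (A ⊗[k] H) →ₗ[k] A ⊗[k] H :=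
  map (LinearMap.mul' k A)
      ((TensorProduct.lid k H).toLinearMap ∘ₗ map (Coalgebra.counit : H →ₗ[k] k) LinearMap.id)
    ∘ₗ (tensorTensorTensorComm k A H A H).toLinearMap

/-- The quantum groupoid antipode `𝒮(a⊗h) = S(a₁) ⊗ d(a₂)h`. -/
def SS (d : A →ₗ[k] H) : A ⊗[k] H →ₗ[k] A ⊗[k] H :=
  map (HopfAlgebra.antipode (R := k) : A →ₗ[k] A) (tmap k A H d)
    ∘ₗ (TensorProduct.assoc k A A H).toLinearMap
    ∘ₗ map (Coalgebra.comul : A →ₗ[k] A ⊗[k] A) LinearMap.id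

/-- The smash product multiplication `(a⊗h)(b⊗g) = a(h₁▷b) ⊗ h₂g`. -/
def smashMul (act : H ⊗[k] A →ₗ[k] A) :
    (A ⊗[k] H) ⊗[k] (A ⊗[k] H) →ₗ[k] A ⊗[k] H :=
  map (LinearMap.mul' k A) LinearMap.id
  ∘ₗ (TensorProduct.assoc k A A H).symm.toLinearMap
  ∘ₗ map LinearMap.id
      (map act (LinearMap.mul' k H)
        ∘ₗ (tensorTensorTensorComm k H H A H).toLinearMap)
  ∘ₗ (TensorProduct.assoc k A (H ⊗[k] H) (A ⊗[k] H)).toLinearMap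
  ∘ₗ map (map LinearMap.id (Coalgebra.comul : H →ₗ[k] H ⊗[k] H)) LinearMap.id

/-- The cotensor product `H1□H1`. -/
def cot (d : A →ₗ[k] H) : Set ((A ⊗[k] H) ⊗[k] (A ⊗[k] H)) :=
  {x | (TensorProduct.assoc k (A ⊗[k] H) H (A ⊗[k] H)).toLinearMap
        (map (DRmap k A H) LinearMap.id x) = map LinearMap.id (DLmap k A H d) x}

/-- A Hopf (algebra) precrossed module. -/
structure HopfPrecrossedModule (act : H ⊗[k] A →ₗ[k] A) (d : A →ₗ[k] H) : Prop where
  /-- `(hg)▷a = h▷(g▷a)` -/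
  act_mul : ∀ (h g : H) (a : A), act ((h * g) ⊗ₜ[k] a) = act (h ⊗ₜ[k] act (g ⊗ₜ[k] a))
  /-- `1▷a = a` -/
  act_one : ∀ a : A, act ((1 : H) ⊗ₜ[k] a) = a
  /-- `h▷(ab) = (h₁▷a)(h₂▷b)` -/
  act_mul_alg : act ∘ₗ map LinearMap.id (LinearMap.mul' k A)
      = LinearMap.mul' k A ∘ₗ map act act
          ∘ₗ (tensorTensorTensorComm k H H A A).toLinearMap
          ∘ₗ map (Coalgebra.comul : H →ₗ[k] H ⊗[k] H) LinearMap.id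
  /-- `h▷1 = ε(h)1` -/
  act_unit : ∀ h : H, act (h ⊗ₜ[k] (1 : A)) = (Coalgebra.counit h : k) • (1 : A)
  /-- `Δ(h▷a) = (h₁▷a₁)⊗(h₂▷a₂)` -/
  act_comul : (Coalgebra.comul : A →ₗ[k] A ⊗[k] A) ∘ₗ act
      = map act act ∘ₗ (tensorTensorTensorComm k H H A A).toLinearMap
          ∘ₗ map (Coalgebra.comul : H →ₗ[k] H ⊗[k] H) (Coalgebra.comul : A →ₗ[k] A ⊗[k] A)
  /-- `ε(h▷a) = ε(h)ε(a)` -/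
  act_counit : ∀ (h : H) (a : A),
      (Coalgebra.counit (act (h ⊗ₜ[k] a)) : k) = Coalgebra.counit h * Coalgebra.counit a
  /-- `h₁ ⊗ (h₂▷a) = h₂ ⊗ (h₁▷a)` -/
  act_cocomm : map LinearMap.id act ∘ₗ (TensorProduct.assoc k H H A).toLinearMap
        ∘ₗ map (Coalgebra.comul : H →ₗ[k] H ⊗[k] H) LinearMap.id
      = map LinearMap.id act ∘ₗ (TensorProduct.assoc k H H A).toLinearMap
        ∘ₗ map ((TensorProduct.comm k H H).toLinearMap
              ∘ₗ (Coalgebra.comul : H →ₗ[k] H ⊗[k] H)) LinearMap.id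
  /-- `d` is multiplicative -/
  d_mul : ∀ a b : A, d (a * b) = d a * d b
  /-- `d(1) = 1` -/
  d_one : d 1 = 1
  /-- `d` is comultiplicative -/
  d_comul : (Coalgebra.comul : H →ₗ[k] H ⊗[k] H) ∘ₗ d
      = map d d ∘ₗ (Coalgebra.comul : A →ₗ[k] A ⊗[k] A)
  /-- `ε∘d = ε` -/
  d_counit : (Coalgebra.counit : H →ₗ[k] k) ∘ₗ d = (Coalgebra.counit : A →ₗ[k] k)


namespace Prop22Aux

open Coalgebra

variable {k A H : Type*} [Field k] [Ring A] [Ring H]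
  [HopfAlgebra k A] [HopfAlgebra k H]

lemma psiVal (act : H ⊗[k] A →ₗ[k] A) (P : H ⊗[k] A →ₗ[k] H) (h : H) (a : A)
    (rh : Coalgebra.Repr k h (H × H)) (ra : Coalgebra.Repr k a (A × A)) :
    (map P act ∘ₗ (tensorTensorTensorComm k H H A A).toLinearMap
      ∘ₗ map (Coalgebra.comul : H →ₗ[k] H ⊗[k] H) (Coalgebra.comul : A →ₗ[k] A ⊗[k] A))
      (h ⊗ₜ[k] a)
    = ∑ i ∈ rh.index, ∑ m ∈ ra.index,
        P (rh.left i ⊗ₜ[k] ra.left m) ⊗ₜ[k] act (rh.right i ⊗ₜ[k] ra.right m) := by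
  simp only [LinearMap.comp_apply, map_tmul, ← rh.eq, ← ra.eq]
  simp only [TensorProduct.sum_tmul, TensorProduct.tmul_sum, map_sum,
    tensorTensorTensorComm_tmul, map_tmul]
  rw [Finset.sum_comm]
  simp [tensorTensorTensorComm_tmul]

lemma Gval (d : A →ₗ[k] H) (h : H) (a : A) (rh : Coalgebra.Repr k h (H × H)) :
    (LinearMap.mul' k H
      ∘ₗ map LinearMap.id (LinearMap.mul' k H
            ∘ₗ map LinearMap.id (HopfAlgebra.antipode (R := k) : H →ₗ[k] H)
            ∘ₗ (TensorProduct.comm k H H).toLinearMap)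
      ∘ₗ (TensorProduct.assoc k H H H).toLinearMap
      ∘ₗ map (Coalgebra.comul : H →ₗ[k] H ⊗[k] H) d) (h ⊗ₜ[k] a)
    = ∑ i ∈ rh.index,
        rh.left i * (d a * HopfAlgebra.antipode (R := k) (rh.right i)) := by
  simp only [LinearMap.comp_apply, map_tmul, ← rh.eq]
  simp [TensorProduct.sum_tmul, map_sum, LinearMap.mul'_apply]

lemma counit_sum {M : Type*} [Ring M] [HopfAlgebra k M] (h : M) (rh : Coalgebra.Repr k h (M × M)) :
    ∑ i ∈ rh.index, (Coalgebra.counit (R := k) (rh.right i)) • rh.left i = h := by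
  have := Coalgebra.sum_tmul_counit_eq rh
  apply_fun (TensorProduct.rid k M) at this
  simpa only [map_sum, TensorProduct.rid_tmul, one_smul] using this

lemma RHSval (act : H ⊗[k] A →ₗ[k] A) (d : A →ₗ[k] H) (h : H) (a : A)
    (rh : Coalgebra.Repr k h (H × H)) (ra : Coalgebra.Repr k a (A × A))
    (rh2 : ∀ i : rh.ι, Coalgebra.Repr k (rh.right i) (H × H)) :
    (map (LinearMap.mul' k H) LinearMap.id
        ∘ₗ (TensorProduct.assoc k H H A).symm.toLinearMap
        ∘ₗ map (LinearMap.mul' k H ∘ₗ map LinearMap.id d)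
            (map (HopfAlgebra.antipode (R := k) : H →ₗ[k] H) act
              ∘ₗ (TensorProduct.assoc k H H A).toLinearMap)
        ∘ₗ (tensorTensorTensorComm k H (H ⊗[k] H) A A).toLinearMap
        ∘ₗ map (map LinearMap.id (Coalgebra.comul : H →ₗ[k] H ⊗[k] H)
              ∘ₗ (Coalgebra.comul : H →ₗ[k] H ⊗[k] H))
            (Coalgebra.comul : A →ₗ[k] A ⊗[k] A)) (h ⊗ₜ[k] a)
    = ∑ i ∈ rh.index, ∑ j ∈ (rh2 i).index, ∑ m ∈ ra.index,
        (rh.left i * d (ra.left m) * HopfAlgebra.antipode (R := k) ((rh2 i).left j))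
          ⊗ₜ[k] act ((rh2 i).right j ⊗ₜ[k] ra.right m) := by
  simp only [LinearMap.comp_apply, map_tmul, ← rh.eq, ← ra.eq]
  simp only [map_sum, TensorProduct.sum_tmul, TensorProduct.tmul_sum, map_tmul,
    LinearMap.id_coe, id_eq]
  rw [Finset.sum_comm]
  refine Finset.sum_congr rfl fun i _ => ?_
  simp only [← (rh2 i).eq]
  simp only [map_sum, TensorProduct.sum_tmul, TensorProduct.tmul_sum, map_tmul,
    tensorTensorTensorComm_tmul, LinearMap.comp_apply, assoc_tmul, assoc_symm_tmul,
    LinearMap.mul'_apply, LinearMap.id_coe, id_eq]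
  rw [Finset.sum_comm]
  simp [tensorTensorTensorComm_tmul, assoc_tmul, assoc_symm_tmul, LinearMap.mul'_apply]

lemma key1 (act : H ⊗[k] A →ₗ[k] A) (d : A →ₗ[k] H) :
    (map (LinearMap.mul' k H) LinearMap.id
        ∘ₗ (TensorProduct.assoc k H H A).symm.toLinearMap
        ∘ₗ map (LinearMap.mul' k H ∘ₗ map LinearMap.id d)
            (map (HopfAlgebra.antipode (R := k) : H →ₗ[k] H) act
              ∘ₗ (TensorProduct.assoc k H H A).toLinearMap)
        ∘ₗ (tensorTensorTensorComm k H (H ⊗[k] H) A A).toLinearMap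
        ∘ₗ map (map LinearMap.id (Coalgebra.comul : H →ₗ[k] H ⊗[k] H)
              ∘ₗ (Coalgebra.comul : H →ₗ[k] H ⊗[k] H))
            (Coalgebra.comul : A →ₗ[k] A ⊗[k] A))
    = map (LinearMap.mul' k H
        ∘ₗ map LinearMap.id (LinearMap.mul' k H
              ∘ₗ map LinearMap.id (HopfAlgebra.antipode (R := k) : H →ₗ[k] H)
              ∘ₗ (TensorProduct.comm k H H).toLinearMap)
        ∘ₗ (TensorProduct.assoc k H H H).toLinearMap
        ∘ₗ map (Coalgebra.comul : H →ₗ[k] H ⊗[k] H) d) act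
      ∘ₗ (tensorTensorTensorComm k H H A A).toLinearMap
      ∘ₗ map (Coalgebra.comul : H →ₗ[k] H ⊗[k] H) (Coalgebra.comul : A →ₗ[k] A ⊗[k] A) := by
  apply TensorProduct.ext'
  intro h a
  classical
  set rh : Coalgebra.Repr k h (H × H) := Coalgebra.Repr.arbitrary k h with hrh
  set ra : Coalgebra.Repr k a (A × A) := Coalgebra.Repr.arbitrary k a with hra
  set rh1 : ∀ i : rh.ι, Coalgebra.Repr k (rh.left i) (H × H) :=
    fun i => Coalgebra.Repr.arbitrary k (rh.left i) with hrh1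
  set rh2 : ∀ i : rh.ι, Coalgebra.Repr k (rh.right i) (H × H) :=
    fun i => Coalgebra.Repr.arbitrary k (rh.right i) with hrh2
  rw [RHSval act d h a rh ra rh2, psiVal act _ h a rh ra]
  have hG : ∀ i m, (LinearMap.mul' k H
        ∘ₗ map LinearMap.id (LinearMap.mul' k H
              ∘ₗ map LinearMap.id (HopfAlgebra.antipode (R := k) : H →ₗ[k] H)
              ∘ₗ (TensorProduct.comm k H H).toLinearMap)
        ∘ₗ (TensorProduct.assoc k H H H).toLinearMap
        ∘ₗ map (Coalgebra.comul : H →ₗ[k] H ⊗[k] H) d)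
          (rh.left i ⊗ₜ[k] ra.left m)
      = ∑ j ∈ (rh1 i).index,
          (rh1 i).left j * (d (ra.left m)
            * HopfAlgebra.antipode (R := k) ((rh1 i).right j)) :=
    fun i m => Gval d _ _ (rh1 i)
  simp only [hG, TensorProduct.sum_tmul]
  -- define the bridging linear map
  set L : H ⊗[k] (H ⊗[k] H) →ₗ[k] H ⊗[k] A :=
    ∑ m ∈ ra.index,
      (map (LinearMap.mul' k H ∘ₗ
              map (LinearMap.mulRight k (d (ra.left m))) (HopfAlgebra.antipode (R := k)))
            (act ∘ₗ (TensorProduct.mk k H A).flip (ra.right m)))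
        ∘ₗ (TensorProduct.assoc k H H H).symm.toLinearMap with hL
  have h3 := Coalgebra.sum_tmul_tmul_eq rh rh1 rh2
  have h4 := congrArg L h3
  simp only [hL, map_sum, LinearMap.sum_apply, LinearMap.comp_apply, assoc_symm_tmul,
    map_tmul, LinearMap.mul'_apply, LinearMap.mulRight_apply, LinearMap.flip_apply,
    TensorProduct.mk_apply] at h4
  calc
    ∑ i ∈ rh.index, ∑ j ∈ (rh2 i).index, ∑ m ∈ ra.index,
        (rh.left i * d (ra.left m) * HopfAlgebra.antipode (R := k) ((rh2 i).left j))
          ⊗ₜ[k] act ((rh2 i).right j ⊗ₜ[k] ra.right m)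
      = ∑ i ∈ rh.index, ∑ j ∈ (rh1 i).index, ∑ m ∈ ra.index,
        ((rh1 i).left j * d (ra.left m) * HopfAlgebra.antipode (R := k) ((rh1 i).right j))
          ⊗ₜ[k] act (rh.right i ⊗ₜ[k] ra.right m) := h4.symm
    _ = ∑ i ∈ rh.index, ∑ m ∈ ra.index, ∑ j ∈ (rh1 i).index,
        ((rh1 i).left j * (d (ra.left m) * HopfAlgebra.antipode (R := k) ((rh1 i).right j)))
          ⊗ₜ[k] act (rh.right i ⊗ₜ[k] ra.right m) := by
      refine Finset.sum_congr rfl fun i _ => ?_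
      rw [Finset.sum_comm]
      simp [mul_assoc]

lemma extract (act : H ⊗[k] A →ₗ[k] A)
    (hcc : ∀ (h : H) (a : A), (Coalgebra.counit (R := k) (act (h ⊗ₜ[k] a)))
        = Coalgebra.counit (R := k) h * Coalgebra.counit (R := k) a)
    (P : H ⊗[k] A →ₗ[k] H) (h : H) (a : A)
    (rh : Coalgebra.Repr k h (H × H)) (ra : Coalgebra.Repr k a (A × A)) :
    ((TensorProduct.rid k H).toLinearMap ∘ₗ map LinearMap.id (Coalgebra.counit : A →ₗ[k] k))
      (∑ i ∈ rh.index, ∑ m ∈ ra.index,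
        P (rh.left i ⊗ₜ[k] ra.left m) ⊗ₜ[k] act (rh.right i ⊗ₜ[k] ra.right m))
    = P (h ⊗ₜ[k] a) := by
  simp only [map_sum, LinearMap.comp_apply, map_tmul, LinearMap.id_coe, id_eq,
    LinearEquiv.coe_coe, TensorProduct.rid_tmul, hcc]
  have key : ∀ x : H,
      ∑ m ∈ ra.index, (Coalgebra.counit (R := k) (ra.right m)) • P (x ⊗ₜ[k] ra.left m)
        = P (x ⊗ₜ[k] a) := by
    intro x
    have : P (x ⊗ₜ[k] a)
        = P (x ⊗ₜ[k] ∑ m ∈ ra.index,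
            (Coalgebra.counit (R := k) (ra.right m)) • ra.left m) := by
      rw [counit_sum a ra]
    rw [this, TensorProduct.tmul_sum, map_sum]
    refine Finset.sum_congr rfl fun m _ => ?_
    rw [TensorProduct.tmul_smul, map_smul]
  calc
    ∑ i ∈ rh.index, ∑ m ∈ ra.index,
        (Coalgebra.counit (R := k) (rh.right i) * Coalgebra.counit (R := k) (ra.right m))
          • P (rh.left i ⊗ₜ[k] ra.left m)
      = ∑ i ∈ rh.index, (Coalgebra.counit (R := k) (rh.right i))
          • ∑ m ∈ ra.index,
              (Coalgebra.counit (R := k) (ra.right m)) • P (rh.left i ⊗ₜ[k] ra.left m) := by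
        refine Finset.sum_congr rfl fun i _ => ?_
        rw [Finset.smul_sum]
        simp [mul_smul]
    _ = ∑ i ∈ rh.index, (Coalgebra.counit (R := k) (rh.right i))
          • P (rh.left i ⊗ₜ[k] a) := by
        refine Finset.sum_congr rfl fun i _ => ?_
        rw [key]
    _ = P ((∑ i ∈ rh.index,
          (Coalgebra.counit (R := k) (rh.right i)) • rh.left i) ⊗ₜ[k] a) := by
        rw [TensorProduct.sum_tmul, map_sum]
        refine Finset.sum_congr rfl fun i _ => ?_
        rw [← TensorProduct.smul_tmul', map_smul]
    _ = P (h ⊗ₜ[k] a) := by rw [counit_sum h rh]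

end Prop22Aux

/-- Proposition 2.2(2): the crossed `H`-module (Yetter–Drinfeld) compatibility between
the action `▷` and the pushout coaction `Δ_L = (d⊗id)Δ`, namely
`d(h₁▷a₁) ⊗ (h₂▷a₂) = h₁ d(a₁) S(h₂) ⊗ (h₃▷a₂)`, holds iff `d(h▷a) = h₁ d(a) S(h₂)`. -/
theorem statement15 (act : H ⊗[k] A →ₗ[k] A) (d : A →ₗ[k] H)
    (hpcm : HopfPrecrossedModule k A H act d) :
    (map (d ∘ₗ act) act
        ∘ₗ (tensorTensorTensorComm k H H A A).toLinearMap
        ∘ₗ map (Coalgebra.comul : H →ₗ[k] H ⊗[k] H) (Coalgebra.comul : A →ₗ[k] A ⊗[k] A)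
      = map (LinearMap.mul' k H) LinearMap.id
        ∘ₗ (TensorProduct.assoc k H H A).symm.toLinearMap
        ∘ₗ map (LinearMap.mul' k H ∘ₗ map LinearMap.id d)
            (map (HopfAlgebra.antipode (R := k) : H →ₗ[k] H) act
              ∘ₗ (TensorProduct.assoc k H H A).toLinearMap)
        ∘ₗ (tensorTensorTensorComm k H (H ⊗[k] H) A A).toLinearMap
        ∘ₗ map (map LinearMap.id (Coalgebra.comul : H →ₗ[k] H ⊗[k] H)
              ∘ₗ (Coalgebra.comul : H →ₗ[k] H ⊗[k] H))
            (Coalgebra.comul : A →ₗ[k] A ⊗[k] A))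
    ↔ (d ∘ₗ act = LinearMap.mul' k H
        ∘ₗ map LinearMap.id (LinearMap.mul' k H
              ∘ₗ map LinearMap.id (HopfAlgebra.antipode (R := k) : H →ₗ[k] H)
              ∘ₗ (TensorProduct.comm k H H).toLinearMap)
        ∘ₗ (TensorProduct.assoc k H H H).toLinearMap
        ∘ₗ map (Coalgebra.comul : H →ₗ[k] H ⊗[k] H) d) := by
  have k1 := Prop22Aux.key1 (k := k) (A := A) (H := H) act d
  constructor
  · intro hEq
    rw [k1] at hEq
    apply TensorProduct.ext'
    intro h a
    classical
    set rh : Coalgebra.Repr k h (H × H) := Coalgebra.Repr.arbitrary k h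
    set ra : Coalgebra.Repr k a (A × A) := Coalgebra.Repr.arbitrary k a
    have e := LinearMap.congr_fun hEq (h ⊗ₜ[k] a)
    rw [Prop22Aux.psiVal act (d ∘ₗ act) h a rh ra,
        Prop22Aux.psiVal act _ h a rh ra] at e
    have e2 := congrArg
      ((TensorProduct.rid k H).toLinearMap ∘ₗ map LinearMap.id (Coalgebra.counit : A →ₗ[k] k)) e
    rw [Prop22Aux.extract act hpcm.act_counit _ h a rh ra,
        Prop22Aux.extract act hpcm.act_counit _ h a rh ra] at e2
    exact e2
  · intro hEq
    rw [hEq]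
    exact k1.symm

end
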